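/- In a digraph G with a designated source s, the dominance relation restricted to the set of vertices reachable from s is a partial order: it is reflexive, transitive, and antisymmetric. -/
import Mathlib


/-- `p` is a directed path starting at `s` in the digraph with edge relation `E`. -/
def IsPathFrom {V : Type*} (E : V → V → Prop) (s : V) (p : List V) : Prop :=
  p.head? = some s ∧ p.Chain' E

/-- `v` is reachable from `s`. -/
def Reaches {V : Type*} (E : V → V → Prop) (s v : V) : Prop :=
  ∃ p : List V, IsPathFrom E s p ∧ p.getLast? = some v

/-- `j` dominates `k` (w.r.t. source `s`): every directed path from `s` to `k` passes
through `j`. -/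
def Dom {V : Type*} (E : V → V → Prop) (s j k : V) : Prop :=
  ∀ p : List V, IsPathFrom E s p → p.getLast? = some k → j ∈ p

private lemma prefix_path {V : Type*} {E : V → V → Prop} {s : V} {q r : List V}
    (hp : IsPathFrom E s (q ++ r)) (hq : q ≠ []) : IsPathFrom E s q := by
  refine ⟨?_, hp.2.prefix ⟨r, rfl⟩⟩
  cases q with
  | nil => exact absurd rfl hq
  | cons a t => simpa using hp.1

private lemma truncate_path {V : Type*} {E : V → V → Prop} {s a : V} {l1 l2 : List V}
    (hp : IsPathFrom E s (l1 ++ a :: l2)) :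
    IsPathFrom E s (l1 ++ [a]) ∧ (l1 ++ [a]).getLast? = some a := by
  have h : (l1 ++ [a]) ++ l2 = l1 ++ a :: l2 := by simp
  refine ⟨prefix_path (h ▸ hp) (by simp), by simp⟩

theorem stmt3 {V : Type*} [Fintype V] (E : V → V → Prop) (s : V) :
    (∀ k, Reaches E s k → Dom E s k k) ∧
    (∀ i j k, Reaches E s i → Reaches E s j → Reaches E s k →
      Dom E s i j → Dom E s j k → Dom E s i k) ∧
    (∀ j k, Reaches E s j → Reaches E s k → Dom E s j k → Dom E s k j → j = k) := by
  refine ⟨?_, ?_, ?_⟩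
  · intro k _ p _ hlast
    obtain ⟨h, rfl⟩ := List.mem_getLast?_eq_getLast hlast
    exact List.getLast_mem h
  · intro i j k _ _ _ hij hjk p hp hlast
    have hj : j ∈ p := hjk p hp hlast
    obtain ⟨l1, l2, rfl⟩ := List.append_of_mem hj
    obtain ⟨hq, hqlast⟩ := truncate_path hp
    have hi : i ∈ l1 ++ [j] := hij _ hq hqlast
    rcases List.mem_append.mp hi with h | h
    · exact List.mem_append_left _ h
    · simp_all
  · intro j k _ hrk hjk hkj
    by_contra hne
    obtain ⟨p, hp, hlast⟩ := hrk
    have key : ∀ n (p : List V), p.length ≤ n → IsPathFrom E s p →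
        p.getLast? = some k → False := by
      intro n
      induction n with
      | zero => intro p hlen hp hl; rw [Nat.le_zero, List.length_eq_zero_iff] at hlen; subst hlen; simp at hl
      | succ n ih =>
        intro p hlen hp hl
        have hj : j ∈ p := hjk p hp hl
        obtain ⟨l1, l2, rfl⟩ := List.append_of_mem hj
        obtain ⟨hq, hqlast⟩ := truncate_path hp
        have hk : k ∈ l1 ++ [j] := hkj _ hq hqlast
        have hk1 : k ∈ l1 := by
          rcases List.mem_append.mp hk with h | h
          · exact h
          · simp at h; exact absurd h.symm hne
        obtain ⟨m1, m2, rfl⟩ := List.append_of_mem hk1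
        have h' : ((m1 ++ k :: m2) ++ j :: l2) = m1 ++ k :: (m2 ++ j :: l2) := by simp
        obtain ⟨hr, hrlast⟩ := truncate_path (h' ▸ hp)
        refine ih (m1 ++ [k]) ?_ hr hrlast
        have h2 : ((m1 ++ k :: m2) ++ j :: l2).length ≤ n + 1 := hlen
        simp at h2 ⊢
        omega
    exact key p.length p le_rfl hp hlast
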